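/- For all natural numbers n and m, the quantity A(n,m) = 2·(2m+3)!·(4n+2m+1)! / ((m+2)!·m!·n!·(3n+2m+3)!) is a positive integer, i.e. the denominator (m+2)!·m!·n!·(3n+2m+3)! divides 2·(2m+3)!·(4n+2m+1)!. -/

import Mathlib

set_option maxHeartbeats 2000000


open Nat

/-- Catalan numbers expressed with factorials: `(j+2)·Cat(j+1)·(j+1)!·(j+1)! = (2j+2)!`. -/
private lemma cat_fact_aux (j : ℕ) :
    (j + 2) * catalan (j + 1) * ((j + 1)! * (j + 1)!) = (2 * j + 2)! := by
  have h1 := succ_mul_catalan_eq_centralBinom (j + 1)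
  rw [Nat.centralBinom_eq_two_mul_choose] at h1
  have h2 := Nat.choose_mul_factorial_mul_factorial (show j + 1 ≤ 2 * (j + 1) by omega)
  rw [show 2 * (j + 1) - (j + 1) = j + 1 by omega] at h2
  calc (j + 2) * catalan (j + 1) * ((j + 1)! * (j + 1)!)
      = (j + 1 + 1) * catalan (j + 1) * (j + 1)! * (j + 1)! := by ring
    _ = (2 * (j + 1)).choose (j + 1) * (j + 1)! * (j + 1)! := by rw [h1]
    _ = (2 * (j + 1))! := h2
    _ = (2 * j + 2)! := by ring_nf

private lemma cat1_q (m : ℕ) :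
    (catalan (m + 1) : ℚ) = (2 * m + 2)! / ((m + 2) * ((m + 1)! * (m + 1)!)) := by
  have h : (((m + 2) * catalan (m + 1) * ((m + 1)! * (m + 1)!) : ℕ) : ℚ)
      = ((2 * m + 2)! : ℚ) := by exact_mod_cast congrArg (Nat.cast (R := ℚ)) (cat_fact_aux m)
  push_cast at h
  rw [eq_div_iff (by positivity)]
  linear_combination h

private lemma cat2_q (m : ℕ) :
    (catalan (m + 2) : ℚ) = (2 * m + 4)! / ((m + 3) * ((m + 2)! * (m + 2)!)) := by
  have h : (((m + 1 + 2) * catalan (m + 1 + 1) * ((m + 1 + 1)! * (m + 1 + 1)!) : ℕ) : ℚ)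
      = ((2 * (m + 1) + 2)! : ℚ) := by
    exact_mod_cast congrArg (Nat.cast (R := ℚ)) (cat_fact_aux (m + 1))
  rw [show m + 1 + 1 = m + 2 by ring, show m + 1 + 2 = m + 3 by ring,
    show 2 * (m + 1) + 2 = 2 * m + 4 by ring] at h
  push_cast at h
  rw [eq_div_iff (by positivity)]
  linear_combination h

private lemma choose_q {a b c : ℕ} (h : b ≤ a) (hc : a - b = c) :
    ((a.choose b : ℚ)) = (a ! : ℚ) / (b ! * c !) := by
  have h2 := Nat.choose_mul_factorial_mul_factorial h
  rw [hc] at h2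
  have h3 : ((a.choose b * b ! * c ! : ℕ) : ℚ) = (a ! : ℚ) := by
    exact_mod_cast congrArg (Nat.cast (R := ℚ)) h2
  push_cast at h3
  rw [eq_div_iff (by positivity)]
  linear_combination h3

private lemma fact_q {a b : ℕ} (p : ℕ) (h : a = b + 1) (hp : (p : ℚ) = (b : ℚ) + 1) :
    ((a ! : ℚ)) = p * (b ! : ℚ) := by
  subst h
  rw [Nat.factorial_succ]
  push_cast
  rw [hp]

/-- Brown's formula `A(n,m) = 2·(2m+3)!·(4n+2m+1)! / ((m+2)!·m!·n!·(3n+2m+3)!)`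
is a positive integer: the denominator divides the numerator. -/
theorem brown_formula_denominator_dvd
    (n m : ℕ) :
    (m + 2)! * m ! * n ! * (3 * n + 2 * m + 3)! ∣ 2 * (2 * m + 3)! * (4 * n + 2 * m + 1)! := by
  have hfne : ∀ j : ℕ, ((j ! : ℚ)) ≠ 0 := fun j => by positivity
  match n with
  | 0 =>
      refine ⟨catalan (m + 1), ?_⟩
      have hq : ((2 * (2 * m + 3)! * (4 * 0 + 2 * m + 1)! : ℕ) : ℚ)
          = (((m + 2)! * m ! * 0! * (3 * 0 + 2 * m + 3)! * catalan (m + 1) : ℕ) : ℚ) := by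
        push_cast
        rw [cat1_q m,
          fact_q (2 * m + 2) (show 2 * m + 2 = (2 * m + 1) + 1 by ring) (by push_cast; ring),
          fact_q (m + 2) (show m + 2 = (m + 1) + 1 by ring) (by push_cast; ring),
          fact_q (m + 1) (show m + 1 = m + 1 by ring) (by push_cast; ring)]
        rw [show (4 * 0 + 2 * m + 1 : ℕ) = 2 * m + 1 by ring,
          show (3 * 0 + 2 * m + 3 : ℕ) = 2 * m + 3 by ring]
        field_simp
        push_cast
        ring
      exact Nat.cast_injective hq
  | 1 =>
      rw [show (3 * 1 + 2 * m + 3 : ℕ) = 2 * m + 6 by ring,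
        show (4 * 1 + 2 * m + 1 : ℕ) = 2 * m + 5 by ring,
        ← Int.natCast_dvd_natCast]
      refine ⟨(2 * (m : ℤ) + 5) * catalan (m + 1)
        - ((catalan (m + 2) : ℤ) + 2 * catalan (m + 1)), ?_⟩
      apply Int.cast_injective (α := ℚ)
      push_cast
      rw [cat1_q m, cat2_q m,
        fact_q (2 * m + 6) (show 2 * m + 6 = (2 * m + 5) + 1 by ring) (by push_cast; ring),
        fact_q (2 * m + 5) (show 2 * m + 5 = (2 * m + 4) + 1 by ring) (by push_cast; ring),
        fact_q (2 * m + 4) (show 2 * m + 4 = (2 * m + 3) + 1 by ring) (by push_cast; ring),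
        fact_q (2 * m + 3) (show 2 * m + 3 = (2 * m + 2) + 1 by ring) (by push_cast; ring),
        fact_q (m + 2) (show m + 2 = (m + 1) + 1 by ring) (by push_cast; ring),
        fact_q (m + 1) (show m + 1 = m + 1 by ring) (by push_cast; ring)]
      field_simp
      push_cast
      ring
  | (k + 2) =>
      rw [show (3 * (k + 2) + 2 * m + 3 : ℕ) = 3 * k + 2 * m + 9 by ring,
        show (4 * (k + 2) + 2 * m + 1 : ℕ) = 4 * k + 2 * m + 9 by ring,
        ← Int.natCast_dvd_natCast]
      refine ⟨(catalan (m + 1) : ℤ) * ((4 * k + 2 * m + 9).choose (k + 2))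
        - ((catalan (m + 2) : ℤ) + 2 * catalan (m + 1)) * ((4 * k + 2 * m + 9).choose (k + 1))
        + 3 * ((catalan (m + 2) : ℤ) - catalan (m + 1)) * ((4 * k + 2 * m + 9).choose k), ?_⟩
      apply Int.cast_injective (α := ℚ)
      push_cast
      rw [cat1_q m, cat2_q m,
        choose_q (show k + 2 ≤ 4 * k + 2 * m + 9 by omega)
          (show 4 * k + 2 * m + 9 - (k + 2) = 3 * k + 2 * m + 7 by omega),
        choose_q (show k + 1 ≤ 4 * k + 2 * m + 9 by omega)
          (show 4 * k + 2 * m + 9 - (k + 1) = 3 * k + 2 * m + 8 by omega),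
        choose_q (show k ≤ 4 * k + 2 * m + 9 by omega)
          (show 4 * k + 2 * m + 9 - k = 3 * k + 2 * m + 9 by omega),
        fact_q (3 * k + 2 * m + 9) (show 3 * k + 2 * m + 9 = (3 * k + 2 * m + 8) + 1 by ring)
          (by push_cast; ring),
        fact_q (3 * k + 2 * m + 8) (show 3 * k + 2 * m + 8 = (3 * k + 2 * m + 7) + 1 by ring)
          (by push_cast; ring),
        fact_q (2 * m + 4) (show 2 * m + 4 = (2 * m + 3) + 1 by ring) (by push_cast; ring),
        fact_q (2 * m + 3) (show 2 * m + 3 = (2 * m + 2) + 1 by ring) (by push_cast; ring),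
        fact_q (k + 2) (show k + 2 = (k + 1) + 1 by ring) (by push_cast; ring),
        fact_q (k + 1) (show k + 1 = k + 1 by ring) (by push_cast; ring),
        fact_q (m + 2) (show m + 2 = (m + 1) + 1 by ring) (by push_cast; ring),
        fact_q (m + 1) (show m + 1 = m + 1 by ring) (by push_cast; ring)]
      field_simp
      push_cast
      ring
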